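/- Let F be a field of characteristic 0, let Γ = F[x,y]/(x² + y⁴ − 1), and let D be the derivation of Γ induced by 2y³ ∂/∂x − x ∂/∂y. Then Γ is differentially simple with respect to D: every nonzero ideal I of Γ with D(I) ⊆ I equals Γ. -/

import Mathlib

set_option synthInstance.maxHeartbeats 400000
set_option maxHeartbeats 1000000

open MvPolynomial

/-- The derivation `D = 2y³ ∂/∂x − x ∂/∂y` of `F[x,y]`. -/
noncomputable def Dxy (F : Type*) [Field F] :
    Derivation F (MvPolynomial (Fin 2) F) (MvPolynomial (Fin 2) F) :=
  mkDerivation F ![2 * X 1 ^ 3, - X 0]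

/-- The quotient ring `Γ = F[x,y]/(x² + y⁴ − 1)`. -/
abbrev Gam (F : Type*) [Field F] : Type _ :=
  MvPolynomial (Fin 2) F ⧸
    Ideal.span {(X 0 ^ 2 + X 1 ^ 4 - 1 : MvPolynomial (Fin 2) F)}

namespace Stmt4Aux

variable (F : Type*) [Field F]

noncomputable def gmk : MvPolynomial (Fin 2) F →+* Gam F :=
  Ideal.Quotient.mk (Ideal.span {(X 0 ^ 2 + X 1 ^ 4 - 1 : MvPolynomial (Fin 2) F)})

noncomputable def Yh : Polynomial F →+* Gam F :=
  (gmk F).comp (Polynomial.aeval (X 1 : MvPolynomial (Fin 2) F)).toRingHom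

noncomputable def xi : Gam F := gmk F (X 0)

noncomputable def cp : Polynomial F := 1 - Polynomial.X ^ 4

lemma Yh_apply (a : Polynomial F) :
    Yh F a = gmk F (Polynomial.aeval (X 1 : MvPolynomial (Fin 2) F) a) := rfl

lemma gmk_rel : gmk F (X 0 ^ 2 + X 1 ^ 4 - 1) = 0 := by
  rw [gmk, Ideal.Quotient.eq_zero_iff_mem]
  exact Ideal.subset_span rfl

lemma xi_sq : xi F ^ 2 = Yh F (cp F) := by
  have : (X 0 ^ 2 : MvPolynomial (Fin 2) F) - (1 - X 1 ^ 4) = X 0 ^ 2 + X 1 ^ 4 - 1 := by ring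
  rw [xi, Yh_apply, cp]
  rw [← map_pow, ← sub_eq_zero, ← map_sub]
  have h2 : Polynomial.aeval (X 1 : MvPolynomial (Fin 2) F) ((1 : Polynomial F) - Polynomial.X ^ 4)
      = (1 - X 1 ^ 4 : MvPolynomial (Fin 2) F) := by simp
  rw [h2, this, gmk_rel]

end Stmt4Aux

open MvPolynomial
namespace Stmt4Aux

variable (F : Type*) [Field F]

lemma Dxy_X0 : Dxy F (X 0) = 2 * X 1 ^ 3 := by
  rw [Dxy, mkDerivation_X]; rfl

lemma Dxy_X1 : Dxy F (X 1) = - X 0 := by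
  rw [Dxy, mkDerivation_X]; rfl

lemma Dxy_aeval (a : Polynomial F) :
    Dxy F (Polynomial.aeval (X 1 : MvPolynomial (Fin 2) F) a)
      = Polynomial.aeval (X 1 : MvPolynomial (Fin 2) F) (Polynomial.derivative a) * (- X 0) := by
  rw [Derivation.comp_aeval_eq, Dxy_X1, smul_eq_mul]

lemma D'_formula (D' : Derivation F (Gam F) (Gam F))
    (hD' : ∀ p : MvPolynomial (Fin 2) F,
      D' (Ideal.Quotient.mk _ p) = Ideal.Quotient.mk _ (Dxy F p))
    (a b : Polynomial F) :
    D' (Yh F a + Yh F b * xi F)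
      = Yh F (2 * Polynomial.X ^ 3 * b - cp F * Polynomial.derivative b)
        - Yh F (Polynomial.derivative a) * xi F := by
  have h0 : Yh F a + Yh F b * xi F
      = gmk F (Polynomial.aeval (X 1 : MvPolynomial (Fin 2) F) a
          + Polynomial.aeval (X 1 : MvPolynomial (Fin 2) F) b * X 0) := by
    rw [map_add, map_mul]; rfl
  rw [h0]
  rw [show (gmk F : MvPolynomial (Fin 2) F →+* Gam F)
        (Polynomial.aeval (X 1 : MvPolynomial (Fin 2) F) a
          + Polynomial.aeval (X 1 : MvPolynomial (Fin 2) F) b * X 0)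
      = Ideal.Quotient.mk _ (Polynomial.aeval (X 1 : MvPolynomial (Fin 2) F) a
          + Polynomial.aeval (X 1 : MvPolynomial (Fin 2) F) b * X 0) from rfl, hD']
  have hDval : Dxy F (Polynomial.aeval (X 1 : MvPolynomial (Fin 2) F) a
          + Polynomial.aeval (X 1 : MvPolynomial (Fin 2) F) b * X 0)
      = Polynomial.aeval (X 1 : MvPolynomial (Fin 2) F) (Polynomial.derivative a) * (- X 0)
        + (Polynomial.aeval (X 1 : MvPolynomial (Fin 2) F) b * (2 * X 1 ^ 3)
          + X 0 * (Polynomial.aeval (X 1 : MvPolynomial (Fin 2) F) (Polynomial.derivative b) * (- X 0))) := by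
    rw [map_add, Derivation.leibniz, Dxy_aeval, Dxy_aeval, Dxy_X0, smul_eq_mul, smul_eq_mul]
  rw [hDval, Yh_apply, Yh_apply, xi]
  rw [show (gmk F : MvPolynomial (Fin 2) F →+* Gam F) = Ideal.Quotient.mk _ from rfl]
  rw [← map_mul, ← map_sub, Ideal.Quotient.eq]
  rw [Ideal.mem_span_singleton']
  refine ⟨- Polynomial.aeval (X 1 : MvPolynomial (Fin 2) F) (Polynomial.derivative b), ?_⟩
  simp only [map_sub, map_mul, map_pow, map_one, Polynomial.aeval_X, map_ofNat, cp]
  ring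

end Stmt4Aux

open MvPolynomial
namespace Stmt4Aux

variable (F : Type*) [Field F]

noncomputable def fA : Polynomial (Polynomial F) := Polynomial.X ^ 2 - Polynomial.C (cp F)

lemma fA_monic : (fA F).Monic := Polynomial.monic_X_pow_sub_C _ (by norm_num)

noncomputable def toA : MvPolynomial (Fin 2) F →ₐ[F] AdjoinRoot (fA F) :=
  MvPolynomial.aeval ![AdjoinRoot.root (fA F), AdjoinRoot.of (fA F) Polynomial.X]

lemma toA_X0 : toA F (X 0) = AdjoinRoot.root (fA F) := by
  rw [toA, aeval_X]; rfl

lemma toA_X1 : toA F (X 1) = AdjoinRoot.of (fA F) Polynomial.X := by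
  rw [toA, aeval_X]; rfl

lemma root_sq : AdjoinRoot.root (fA F) ^ 2 = AdjoinRoot.of (fA F) (cp F) := by
  have h : AdjoinRoot.mk (fA F) (Polynomial.X ^ 2 - Polynomial.C (cp F)) = 0 :=
    AdjoinRoot.mk_self
  rw [map_sub, map_pow, AdjoinRoot.mk_X, AdjoinRoot.mk_C, sub_eq_zero] at h
  exact h

lemma toA_rel : toA F (X 0 ^ 2 + X 1 ^ 4 - 1) = 0 := by
  rw [map_sub, map_add, map_pow, map_pow, map_one, toA_X0, toA_X1, root_sq]
  rw [cp, map_sub, map_one, map_pow]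
  ring

noncomputable def toA' : Gam F →+* AdjoinRoot (fA F) :=
  Ideal.Quotient.lift _ (toA F).toRingHom (by
    intro p hp
    rw [Ideal.mem_span_singleton] at hp
    obtain ⟨t, rfl⟩ := hp
    rw [AlgHom.toRingHom_eq_coe, RingHom.coe_coe, map_mul, toA_rel, zero_mul])

lemma toA'_mk (p : MvPolynomial (Fin 2) F) : toA' F (gmk F p) = toA F p := rfl

noncomputable def toG : AdjoinRoot (fA F) →+* Gam F :=
  AdjoinRoot.lift (Yh F) (xi F) (by
    rw [fA, Polynomial.eval₂_sub, Polynomial.eval₂_pow, Polynomial.eval₂_X,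
      Polynomial.eval₂_C, xi_sq, sub_self])

lemma toA'_Yh (r : Polynomial F) : toA' F (Yh F r) = AdjoinRoot.of (fA F) r := by
  have h : (toA' F).comp (Yh F) = AdjoinRoot.of (fA F) := by
    apply Polynomial.ringHom_ext
    · intro a
      rw [RingHom.comp_apply, Yh_apply, toA'_mk]
      rw [show Polynomial.aeval (X 1 : MvPolynomial (Fin 2) F) (Polynomial.C a)
          = MvPolynomial.C a by simp]
      rw [show (toA F) (MvPolynomial.C a) = algebraMap F (AdjoinRoot (fA F)) a by
        rw [toA]; simp]
      rw [AdjoinRoot.algebraMap_eq', RingHom.comp_apply, Polynomial.algebraMap_eq]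
    · rw [RingHom.comp_apply, Yh_apply, toA'_mk]
      rw [show Polynomial.aeval (X 1 : MvPolynomial (Fin 2) F) (Polynomial.X)
          = (X 1 : MvPolynomial (Fin 2) F) by simp]
      rw [toA_X1]
  exact DFunLike.congr_fun h r

lemma toG_toA (p : MvPolynomial (Fin 2) F) : toG F (toA F p) = gmk F p := by
  have h : (toG F).comp (toA F).toRingHom = (gmk F) := by
    apply MvPolynomial.ringHom_ext
    · intro a
      rw [RingHom.comp_apply, AlgHom.toRingHom_eq_coe, RingHom.coe_coe]
      rw [show (toA F) (MvPolynomial.C a) = algebraMap F (AdjoinRoot (fA F)) a by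
        rw [toA]; simp]
      rw [AdjoinRoot.algebraMap_eq', RingHom.comp_apply, Polynomial.algebraMap_eq,
        toG, AdjoinRoot.lift_of, Yh_apply]
      simp
    · intro i
      fin_cases i
      · rw [RingHom.comp_apply, AlgHom.toRingHom_eq_coe, RingHom.coe_coe]
        show toG F (toA F (X 0)) = gmk F (X 0)
        rw [toA_X0, toG, AdjoinRoot.lift_root]; rfl
      · rw [RingHom.comp_apply, AlgHom.toRingHom_eq_coe, RingHom.coe_coe]
        show toG F (toA F (X 1)) = gmk F (X 1)
        rw [toA_X1, toG, AdjoinRoot.lift_of, Yh_apply]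
        simp
  exact DFunLike.congr_fun h p

lemma surj_ab (z : Gam F) : ∃ a b : Polynomial F, z = Yh F a + Yh F b * xi F := by
  obtain ⟨p, rfl⟩ := Ideal.Quotient.mk_surjective z
  obtain ⟨g, hg⟩ := AdjoinRoot.mk_surjective (toA F p)
  set h := g %ₘ (fA F) with hh
  have hdeg : h.degree < 2 := by
    have := Polynomial.degree_modByMonic_lt g (fA_monic F)
    rwa [fA, Polynomial.degree_X_pow_sub_C (by norm_num)] at this
  have hdeg1 : h.degree ≤ 1 := by
    rcases lt_or_ge h.degree 2 with h' | h'
    · exact Order.le_of_lt_succ (by exact_mod_cast hdeg)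
    · exact absurd hdeg (not_lt.mpr h')
  refine ⟨h.coeff 0, h.coeff 1, ?_⟩
  have hzz : gmk F p = toG F (toA F p) := (toG_toA F p).symm
  rw [show (Ideal.Quotient.mk _ p : Gam F) = gmk F p from rfl, hzz, ← hg, toG,
    AdjoinRoot.lift_mk]
  have hfz : (fA F).eval₂ (Yh F) (xi F) = 0 := by
    rw [fA, Polynomial.eval₂_sub, Polynomial.eval₂_pow, Polynomial.eval₂_X,
      Polynomial.eval₂_C, xi_sq, sub_self]
  have hmod : g.eval₂ (Yh F) (xi F) = h.eval₂ (Yh F) (xi F) := by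
    conv_lhs => rw [← Polynomial.modByMonic_add_div g (fA F)]
    rw [Polynomial.eval₂_add, Polynomial.eval₂_mul, hfz, zero_mul, add_zero]
  rw [hmod]
  conv_lhs => rw [Polynomial.eq_X_add_C_of_degree_le_one hdeg1]
  rw [Polynomial.eval₂_add, Polynomial.eval₂_mul, Polynomial.eval₂_C,
    Polynomial.eval₂_C, Polynomial.eval₂_X]
  ring

lemma inj_ab (a b : Polynomial F) (hz : Yh F a + Yh F b * xi F = 0) : a = 0 ∧ b = 0 := by
  have h0 : AdjoinRoot.of (fA F) a + AdjoinRoot.of (fA F) b * AdjoinRoot.root (fA F) = 0 := by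
    have := congrArg (toA' F) hz
    rwa [map_add, map_mul, toA'_Yh, toA'_Yh, map_zero,
      show toA' F (xi F) = AdjoinRoot.root (fA F) by rw [xi, toA'_mk, toA_X0]] at this
  have h1 : AdjoinRoot.mk (fA F) (Polynomial.C a + Polynomial.C b * Polynomial.X) = 0 := by
    rw [map_add, map_mul, AdjoinRoot.mk_C, AdjoinRoot.mk_C, AdjoinRoot.mk_X]
    exact h0
  rw [AdjoinRoot.mk_eq_zero] at h1
  have h2 : Polynomial.C a + Polynomial.C b * Polynomial.X = 0 := by
    by_contra hne
    have hd := Polynomial.degree_le_of_dvd h1 hne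
    rw [fA, Polynomial.degree_X_pow_sub_C (by norm_num)] at hd
    have : (Polynomial.C a + Polynomial.C b * Polynomial.X).degree ≤ 1 := by
      calc _ ≤ max (Polynomial.C a).degree (Polynomial.C b * Polynomial.X).degree :=
            Polynomial.degree_add_le _ _
        _ ≤ 1 := by
            apply max_le
            · exact le_trans Polynomial.degree_C_le (by norm_num)
            · exact le_trans (Polynomial.degree_mul_le _ _) (by
                simpa using add_le_add Polynomial.degree_C_le (le_refl (Polynomial.X : Polynomial (Polynomial F)).degree))
    have hlt : (Polynomial.C a + Polynomial.C b * Polynomial.X).degree < 2 :=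
      lt_of_le_of_lt this (by norm_num)
    have hd2 : (2 : WithBot ℕ) ≤ (Polynomial.C a + Polynomial.C b * Polynomial.X).degree := by
      exact_mod_cast hd
    exact absurd hlt (not_lt.mpr hd2)
  constructor
  · have := congrArg (fun p => Polynomial.coeff p 0) h2
    simpa using this
  · have := congrArg (fun p => Polynomial.coeff p 1) h2
    simpa using this

end Stmt4Aux

namespace Stmt4Aux

local notation "pX" => Polynomial.X
local notation "pC" => Polynomial.C
local notation "pd" => Polynomial.derivative

variable (F : Type*) [Field F]

lemma cp_deriv : pd (cp F) = -((4 : Polynomial F) * pX ^ 3) := by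
  simp [cp]
  rw [show (Polynomial.C (3:F)) = 3 from map_ofNat Polynomial.C 3]; norm_num

lemma not_dvd_X_of_dvd_cp (p : Polynomial F) (hp : Irreducible p) (hpc : p ∣ cp F) :
    ¬ p ∣ (pX : Polynomial F) := by
  intro h
  have h4 : p ∣ (pX : Polynomial F) ^ 4 := dvd_pow h (by norm_num)
  have h1 : p ∣ (1 : Polynomial F) := by
    have : (1 : Polynomial F) = cp F + pX ^ 4 := by rw [cp]; ring
    rw [this]; exact dvd_add hpc h4
  exact hp.not_isUnit (isUnit_of_dvd_one h1)

lemma key_poly [CharZero F] (g : Polynomial F) (hg0 : g ≠ 0)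
    (h1 : g ∣ cp F * pd g)
    (h2 : g ∣ cp F * pd (pd g) - 2 * pX ^ 3 * pd g) : IsUnit g := by
  by_contra hu
  obtain ⟨p, hp, hpg⟩ := WfDvdMonoid.exists_irreducible_factor hu hg0
  have hprime : Prime p := hp.prime
  obtain ⟨m, u, hpu, hgu⟩ := WfDvdMonoid.max_power_factor hg0 hp
  have hm1 : m ≠ 0 := by
    rintro rfl
    rw [pow_zero, one_mul] at hgu
    exact hpu (hgu ▸ hpg)
  obtain ⟨k, rfl⟩ : ∃ k, m = k + 1 :=
    ⟨m - 1, (Nat.succ_pred_eq_of_pos (Nat.pos_of_ne_zero hm1)).symm⟩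
  have hp0 : p ≠ 0 := hp.ne_zero
  have hu0 : u ≠ 0 := by rintro rfl; rw [mul_zero] at hgu; exact hg0 hgu
  set ck : Polynomial F := pC ((k : F) + 1) with hckdef
  have hcku : IsUnit ck := Polynomial.isUnit_C.mpr (isUnit_iff_ne_zero.mpr
    (by exact_mod_cast Nat.cast_add_one_ne_zero (R := F) k))
  have hck : ¬ p ∣ ck := fun h => hp.not_isUnit (isUnit_of_dvd_unit h hcku)
  have hpdeg : 0 < p.natDegree := hp.natDegree_pos
  have hpd0 : pd p ≠ 0 := by
    intro h
    have := Polynomial.natDegree_eq_zero_of_derivative_eq_zero h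
    omega
  have hppd : ¬ p ∣ pd p := fun hd => by
    have hle := Polynomial.degree_le_of_dvd hd hpd0
    have hlt := Polynomial.degree_derivative_lt hp0
    exact absurd (lt_of_le_of_lt hle hlt) (lt_irrefl _)
  set s : Polynomial F := ck * pd p * u + p * pd u with hs
  have hg' : pd g = p ^ k * s := by
    rw [hgu, Polynomial.derivative_mul, Polynomial.derivative_pow_succ, hs, hckdef]
    ring
  obtain ⟨q, hq⟩ := h1
  have hkey1 : cp F * s = q * (p * u) := by
    refine mul_left_cancel₀ (pow_ne_zero k hp0) ?_
    calc p ^ k * (cp F * s) = cp F * (p ^ k * s) := by ring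
      _ = cp F * pd g := by rw [hg']
      _ = g * q := hq
      _ = p ^ (k + 1) * u * q := by rw [hgu]
      _ = p ^ k * (q * (p * u)) := by ring
  have hpc : p ∣ cp F := by
    have hd : p ∣ cp F * (ck * pd p * u) :=
      ⟨q * u - cp F * pd u, by linear_combination hkey1 - cp F * hs⟩
    rcases hprime.dvd_mul.mp hd with h | h
    · exact h
    rcases hprime.dvd_mul.mp h with h | h
    · rcases hprime.dvd_mul.mp h with h | h
      · exact absurd h hck
      · exact absurd h hppd
    · exact absurd h hpu
  obtain ⟨w, hw⟩ := hpc
  have hX : ¬ p ∣ (pX : Polynomial F) := not_dvd_X_of_dvd_cp F p hp ⟨w, hw⟩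
  have hE1 : w * s = q * u := by
    refine mul_left_cancel₀ hp0 ?_
    calc p * (w * s) = (p * w) * s := by ring
      _ = cp F * s := by rw [← hw]
      _ = q * (p * u) := hkey1
      _ = p * (q * u) := by ring
  have hD1 : p ∣ q - ck * w * pd p := by
    have hwit : u * (q - ck * w * pd p) = p * (w * pd u) := by
      linear_combination (-1 : Polynomial F) * hE1 + w * hs
    exact (hprime.dvd_or_dvd ⟨w * pd u, hwit⟩).resolve_left hpu
  have hD3 : p ∣ pd p * w + 4 * pX ^ 3 := by
    have hdc : pd (cp F) = pd p * w + p * pd w := by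
      rw [hw, Polynomial.derivative_mul]
    refine ⟨- pd w, ?_⟩
    have hcp' := cp_deriv F
    linear_combination hcp' - hdc
  obtain ⟨q2, hq2⟩ := h2
  have hdq : pd (cp F) * pd g + cp F * pd (pd g) = pd g * q + g * pd q := by
    have hder := congrArg pd hq
    rwa [Polynomial.derivative_mul, Polynomial.derivative_mul] at hder
  have hkey2 : (q + 2 * pX ^ 3) * pd g = g * (q2 - pd q) := by
    have hcp' := cp_deriv F
    linear_combination hq2 - hdq + pd g * hcp'
  have hr : ∃ r, (q + 2 * pX ^ 3) * s = p * r := by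
    refine ⟨u * (q2 - pd q), mul_left_cancel₀ (pow_ne_zero k hp0) ?_⟩
    calc p ^ k * ((q + 2 * pX ^ 3) * s) = (q + 2 * pX ^ 3) * (p ^ k * s) := by ring
      _ = (q + 2 * pX ^ 3) * pd g := by rw [hg']
      _ = g * (q2 - pd q) := hkey2
      _ = p ^ (k + 1) * u * (q2 - pd q) := by rw [hgu]
      _ = p ^ k * (p * (u * (q2 - pd q))) := by ring
  have hD2 : p ∣ q + 2 * pX ^ 3 := by
    obtain ⟨r, hrr⟩ := hr
    have hd : p ∣ (q + 2 * pX ^ 3) * (ck * pd p * u) :=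
      ⟨r - (q + 2 * pX ^ 3) * pd u, by linear_combination hrr - (q + 2 * pX ^ 3) * hs⟩
    rcases hprime.dvd_mul.mp hd with h | h
    · exact h
    rcases hprime.dvd_mul.mp h with h | h
    · rcases hprime.dvd_mul.mp h with h | h
      · exact absurd h hck
      · exact absurd h hppd
    · exact absurd h hpu
  have hfinal : p ∣ (2 - 4 * ck) * pX ^ 3 := by
    have h := dvd_sub (dvd_sub hD2 hD1) (Dvd.dvd.mul_left hD3 ck)
    have heq : (2 - 4 * ck) * pX ^ 3
        = (q + 2 * pX ^ 3) - (q - ck * w * pd p) - ck * (pd p * w + 4 * pX ^ 3) := by ring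
    rwa [heq]
  have hcu : IsUnit ((2 : Polynomial F) - 4 * ck) := by
    have : (2 : Polynomial F) - 4 * ck = pC (2 - 4 * ((k : F) + 1)) := by
      rw [hckdef, map_sub, map_mul, map_ofNat, map_ofNat]
    rw [this]
    refine Polynomial.isUnit_C.mpr (isUnit_iff_ne_zero.mpr ?_)
    intro hzero
    have : ((4 * k + 2 : ℕ) : F) = 0 := by push_cast; linear_combination -hzero
    exact (Nat.cast_ne_zero (R := F)).mpr (by omega) this
  rcases hprime.dvd_mul.mp hfinal with h | h
  · exact hp.not_isUnit (isUnit_of_dvd_unit h hcu)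
  · exact hX (hprime.dvd_of_dvd_pow h)

end Stmt4Aux

namespace Stmt4Aux

local notation "pX" => Polynomial.X
local notation "pC" => Polynomial.C
local notation "pd" => Polynomial.derivative

variable (F : Type*) [Field F]

lemma cp_eval0 : (cp F).eval 0 = 1 := by simp [cp]

lemma cp_ne : cp F ≠ 0 := by
  intro h0
  have := congrArg (Polynomial.eval 0) h0
  rw [cp_eval0] at this
  simp at this

lemma norm_ne [CharZero F] (a b : Polynomial F) (hb : b ≠ 0)
    (h : a * a = cp F * b * b) : False := by
  have ha0 : a ≠ 0 := by
    rintro rfl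
    exact (mul_ne_zero (mul_ne_zero (cp_ne F) hb) hb) (by rw [← h, mul_zero])
  have he : cp F = (pX - pC (1:F)) * (-(pX ^ 3 + pX ^ 2 + pX + 1)) := by
    rw [cp, map_one]; ring
  have he0 : ¬ Polynomial.IsRoot (-(pX ^ 3 + pX ^ 2 + pX + 1) : Polynomial F) 1 := by
    intro hr
    rw [Polynomial.IsRoot] at hr
    simp at hr
    norm_num at hr
  have hE0 : (-(pX ^ 3 + pX ^ 2 + pX + 1) : Polynomial F) ≠ 0 := by
    intro h0
    exact he0 (by rw [h0]; simp)
  have hXC : ((pX - pC (1:F)) : Polynomial F) ≠ 0 := Polynomial.X_sub_C_ne_zero 1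
  have hL : Polynomial.rootMultiplicity 1 (a * a)
      = Polynomial.rootMultiplicity 1 a + Polynomial.rootMultiplicity 1 a :=
    Polynomial.rootMultiplicity_mul (mul_ne_zero ha0 ha0)
  have hR : Polynomial.rootMultiplicity 1 (cp F * b * b)
      = 1 + Polynomial.rootMultiplicity 1 b + Polynomial.rootMultiplicity 1 b := by
    rw [Polynomial.rootMultiplicity_mul (mul_ne_zero (mul_ne_zero (cp_ne F) hb) hb),
      Polynomial.rootMultiplicity_mul (mul_ne_zero (cp_ne F) hb)]
    congr 2
    rw [he, Polynomial.rootMultiplicity_mul (mul_ne_zero hXC hE0),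
      Polynomial.rootMultiplicity_X_sub_C_self, Polynomial.rootMultiplicity_eq_zero he0]
  rw [h, hR] at hL
  omega

end Stmt4Aux

section MainProof

open Stmt4Aux

local notation "pX" => Polynomial.X
local notation "pd" => Polynomial.derivative

theorem stmt4' (F : Type*) [Field F] [CharZero F]
    (D' : Derivation F (Gam F) (Gam F))
    (hD' : ∀ p : MvPolynomial (Fin 2) F,
      D' (Ideal.Quotient.mk _ p) = Ideal.Quotient.mk _ (Dxy F p))
    (I : Ideal (Gam F)) (hI : I ≠ ⊥) (hinv : ∀ a ∈ I, D' a ∈ I) :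
    I = ⊤ := by
  classical
  have hKd0 : ∀ a : Polynomial F, Yh F a ∈ I → Yh F (pd a) * xi F ∈ I := by
    intro a ha
    have hf := D'_formula F D' hD' a 0
    simp only [map_zero, zero_mul, add_zero, Polynomial.derivative_zero, mul_zero,
      sub_zero, zero_sub] at hf
    have hmem := hinv _ ha
    rw [hf] at hmem
    exact neg_mem_iff.mp hmem
  have hKd1 : ∀ a : Polynomial F, Yh F a ∈ I → Yh F (cp F * pd a) ∈ I := by
    intro a ha
    have h0 := I.mul_mem_left (xi F) (hKd0 a ha)
    have heq : xi F * (Yh F (pd a) * xi F) = Yh F (cp F * pd a) := by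
      rw [map_mul]
      linear_combination Yh F (pd a) * xi_sq F
    rwa [heq] at h0
  have hKd2 : ∀ a : Polynomial F,
      Yh F a ∈ I → Yh F (cp F * pd (pd a) - 2 * pX ^ 3 * pd a) ∈ I := by
    intro a ha
    have h0 := hKd0 a ha
    have harg : Yh F 0 + Yh F (-pd a) * xi F = -(Yh F (pd a) * xi F) := by
      rw [map_zero, map_neg]; ring
    have hmem : Yh F 0 + Yh F (-pd a) * xi F ∈ I := by
      rw [harg]; exact neg_mem h0
    have hf := D'_formula F D' hD' 0 (-pd a)
    have key := hinv _ hmem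
    rw [hf] at key
    have heq : (2 * pX ^ 3 * (-pd a) - cp F * pd (-pd a))
        = cp F * pd (pd a) - 2 * pX ^ 3 * pd a := by
      rw [Polynomial.derivative_neg]; ring
    rwa [heq, Polynomial.derivative_zero, map_zero, zero_mul, sub_zero] at key
  obtain ⟨z, hzI, hz0⟩ := Submodule.exists_mem_ne_zero_of_ne_bot hI
  obtain ⟨a, b, rfl⟩ := surj_ab F z
  have hnormI : Yh F (a * a - cp F * b * b) ∈ I := by
    have hfac : Yh F (a * a - cp F * b * b)
        = (Yh F a - Yh F b * xi F) * (Yh F a + Yh F b * xi F) := by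
      rw [map_sub, map_mul, map_mul, map_mul]
      linear_combination (Yh F b * Yh F b) * xi_sq F
    rw [hfac]
    exact I.mul_mem_left _ hzI
  have hnorm0 : a * a - cp F * b * b ≠ 0 := by
    intro h0
    have hab : a * a = cp F * b * b := by linear_combination h0
    by_cases hb : b = 0
    · subst hb
      rw [mul_zero] at hab
      have ha : a = 0 := mul_self_eq_zero.mp (by rw [hab])
      subst ha
      simp at hz0
    · exact norm_ne F a b hb hab
  set K : Ideal (Polynomial F) := Ideal.comap (Yh F) I with hKdef
  have hK0 : K ≠ ⊥ := by
    intro hbot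
    have : a * a - cp F * b * b ∈ K := Ideal.mem_comap.mpr hnormI
    rw [hbot, Ideal.mem_bot] at this
    exact hnorm0 this
  haveI hKpr : K.IsPrincipal := IsPrincipalIdealRing.principal K
  set g : Polynomial F := Submodule.IsPrincipal.generator K with hgdef
  have hKg : K = Ideal.span {g} := (Ideal.span_singleton_generator K).symm
  have hg0 : g ≠ 0 := fun h =>
    hK0 ((Submodule.IsPrincipal.eq_bot_iff_generator_eq_zero K).mpr h)
  have hgK : g ∈ K := Submodule.IsPrincipal.generator_mem K
  have hc1 : cp F * pd g ∈ K := Ideal.mem_comap.mpr (hKd1 g (Ideal.mem_comap.mp hgK))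
  have hc2 : cp F * pd (pd g) - 2 * pX ^ 3 * pd g ∈ K :=
    Ideal.mem_comap.mpr (hKd2 g (Ideal.mem_comap.mp hgK))
  have hdv1 : g ∣ cp F * pd g := by
    rw [hKg, Ideal.mem_span_singleton] at hc1; exact hc1
  have hdv2 : g ∣ cp F * pd (pd g) - 2 * pX ^ 3 * pd g := by
    rw [hKg, Ideal.mem_span_singleton] at hc2; exact hc2
  have hgu := key_poly F g hg0 hdv1 hdv2
  have hKtop : K = ⊤ := by rw [hKg]; exact Ideal.span_singleton_eq_top.mpr hgu
  have h1K : (1 : Polynomial F) ∈ K := hKtop ▸ Submodule.mem_top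
  have h1I : (1 : Gam F) ∈ I := by
    have := Ideal.mem_comap.mp h1K
    rwa [map_one] at this
  exact (Ideal.eq_top_iff_one I).mpr h1I

end MainProof

/-- `Γ = F[x,y]/(x² + y⁴ − 1)` is differentially simple with respect to the
derivation induced by `D = 2y³ ∂/∂x − x ∂/∂y`: every nonzero `D`-invariant ideal
of `Γ` equals `Γ`. -/
theorem stmt4 (F : Type*) [Field F] [CharZero F]
    (D' : Derivation F (Gam F) (Gam F))
    (hD' : ∀ p : MvPolynomial (Fin 2) F,
      D' (Ideal.Quotient.mk _ p) = Ideal.Quotient.mk _ (Dxy F p))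
    (I : Ideal (Gam F)) (hI : I ≠ ⊥) (hinv : ∀ a ∈ I, D' a ∈ I) :
    I = ⊤ :=
  stmt4' F D' hD' I hI hinv
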